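/- If P is a lattice-face d-polytope, then the projection of its set of lattice points equals the set of lattice points of its projection: π(L(P)) = L(π(P)). -/

import Mathlib

open MeasureTheory Polynomial

noncomputable section

/-- The lattice points of `ℝ^d`: points all of whose coordinates are integers. -/
def latticePts (d : ℕ) : Set (Fin d → ℝ) := {x | ∀ i, ∃ n : ℤ, x i = (n : ℝ)}

/-- The projection `π^{(d-k)} : ℝ^d → ℝ^k` forgetting the last `d - k` coordinates
(for `k ≤ d`; junk value `0` in out-of-range coordinates otherwise). -/
def projTo (d k : ℕ) (x : Fin d → ℝ) : Fin k → ℝ :=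
  fun i => if h : (i : ℕ) < d then x ⟨(i : ℕ), h⟩ else 0

/-- A polytope with vertex set `V ⊆ ℝ^d` is a lattice-face polytope if for every
`0 ≤ k ≤ d-1` and every `(k+1)`-subset `U ⊆ V`, `π^{(d-k)}(aff(U) ∩ ℤ^d) = ℤ^k`. -/
def IsLatticeFace (d : ℕ) (V : Finset (Fin d → ℝ)) : Prop :=
  ∀ k : ℕ, k < d → ∀ U : Finset (Fin d → ℝ), U ⊆ V → U.card = k + 1 →
    projTo d k '' ((affineSpan ℝ (U : Set (Fin d → ℝ)) : Set (Fin d → ℝ)) ∩ latticePts d)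
      = latticePts k

/-- The last coordinate of a point of `ℝ^d`. -/
def lastCoord (d : ℕ) (x : Fin d → ℝ) : ℝ :=
  if h : 0 < d then x ⟨d - 1, by omega⟩ else 0

/-- The negative boundary `NB(P)`: points of `P` minimizing the last coordinate in
their fiber over `π(P)`. -/
def NB (d : ℕ) (P : Set (Fin d → ℝ)) : Set (Fin d → ℝ) :=
  {x | x ∈ P ∧ ∀ y ∈ P, projTo d (d - 1) y = projTo d (d - 1) x → lastCoord d x ≤ lastCoord d y}

/-- The positive boundary `PB(P)`: points of `P` maximizing the last coordinate in
their fiber over `π(P)`. -/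
def PB (d : ℕ) (P : Set (Fin d → ℝ)) : Set (Fin d → ℝ) :=
  {x | x ∈ P ∧ ∀ y ∈ P, projTo d (d - 1) y = projTo d (d - 1) x → lastCoord d y ≤ lastCoord d x}

/-- `i(P,m)`: the number of lattice points in the dilate `mP`. -/
def ehr (d : ℕ) (P : Set (Fin d → ℝ)) (m : ℕ) : ℕ :=
  (latticePts d ∩ (fun x => (m : ℝ) • x) '' P).ncard

/-- `î(P,m)`: the number of lattice points in the interior of the dilate `mP`. -/
def intEhr (d : ℕ) (P : Set (Fin d → ℝ)) (m : ℕ) : ℕ :=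
  (latticePts d ∩ interior ((fun x => (m : ℝ) • x) '' P)).ncard

/-- The `j`-th coordinate (`0`-indexed) of a point of `ℝ^d`, junk value `0` if `j ≥ d`. -/
def coordN {d : ℕ} (w : Fin d → ℝ) (j : ℕ) : ℝ := if h : j < d then w ⟨j, h⟩ else 0

/-- The vertex occurring in row `p` (0-indexed) of the matrices `X(σ,k)`, `Y(σ,k)`:
vertex `v_{σ(p+1)}` for `p < k`, and `v_{d+1}` for the last row of `X(σ,k)`. -/
def rowVert (d : ℕ) (v : Fin (d + 1) → Fin d → ℝ) (σ : Equiv.Perm (Fin d)) (k p : ℕ) :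
    Fin d → ℝ :=
  if h : p < k ∧ p < d then v (Fin.castSucc (σ ⟨p, h.2⟩)) else v (Fin.last d)

/-- The matrix `X(σ,k)` with rows `(1, x_{σ(i),1},…,x_{σ(i),k})` for `1 ≤ i ≤ k`
followed by `(1, x_{d+1,1},…,x_{d+1,k})`. -/
def Xmat (d : ℕ) (v : Fin (d + 1) → Fin d → ℝ) (σ : Equiv.Perm (Fin d)) (k : ℕ) :
    Matrix (Fin (k + 1)) (Fin (k + 1)) ℝ :=
  Matrix.of fun p q =>
    if (q : ℕ) = 0 then 1 else coordN (rowVert d v σ k (p : ℕ)) ((q : ℕ) - 1)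

/-- The matrix `Y(σ,k)` with rows `(1, x_{σ(i),1},…,x_{σ(i),k-1})` for `1 ≤ i ≤ k`. -/
def Ymat (d : ℕ) (v : Fin (d + 1) → Fin d → ℝ) (σ : Equiv.Perm (Fin d)) (k : ℕ) :
    Matrix (Fin k) (Fin k) ℝ :=
  Matrix.of fun p q =>
    if (q : ℕ) = 0 then 1 else coordN (rowVert d v σ k (p : ℕ)) ((q : ℕ) - 1)

/-- The matrix `X̃(σ,k;x)`: `X(σ,k)` with its last row replaced by `(1, x_1,…,x_k)`. -/
def Xtil (d : ℕ) (v : Fin (d + 1) → Fin d → ℝ) (σ : Equiv.Perm (Fin d)) (k : ℕ)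
    (x : Fin d → ℝ) : Matrix (Fin (k + 1)) (Fin (k + 1)) ℝ :=
  Matrix.of fun p q =>
    if (q : ℕ) = 0 then 1
    else if (p : ℕ) < k then coordN (rowVert d v σ k (p : ℕ)) ((q : ℕ) - 1)
    else coordN x ((q : ℕ) - 1)

/-- `z(σ,k) = det X(σ,k) / det Y(σ,k)`; note `z(σ,0) = 1`. -/
def zc (d : ℕ) (v : Fin (d + 1) → Fin d → ℝ) (σ : Equiv.Perm (Fin d)) (k : ℕ) : ℝ :=
  (Xmat d v σ k).det / (Ymat d v σ k).det

/-- The minor `m(σ,k;j)` of `X̃(σ,k;x)` obtained by deleting the last row and the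
`(j+1)`-st column (it does not depend on `x`). -/
def minorM (d : ℕ) (v : Fin (d + 1) → Fin d → ℝ) (σ : Equiv.Perm (Fin d)) (k j : ℕ) : ℝ :=
  (Matrix.of fun p q : Fin k =>
    Xmat d v σ k (Fin.castSucc p) (if (q : ℕ) < j + 1 then Fin.castSucc q else q.succ)).det

/-- A `d`-simplex with vertices `v_1, …, v_{d+1}` is in general position if its vertices
are affinely independent and for every `0 ≤ k ≤ d-1` and every `(k+1)`-subset `U` of the
vertex set, `π^{(d-k)}(conv U)` is a `k`-simplex. -/
def SimplexGenPos (d : ℕ) (v : Fin (d + 1) → Fin d → ℝ) : Prop :=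
  AffineIndependent ℝ v ∧
    ∀ k : ℕ, k < d → ∀ U : Finset (Fin (d + 1)), U.card = k + 1 →
      affineSpan ℝ (projTo d k '' (v '' (U : Set (Fin (d + 1))))) = ⊤

/-- A lattice-face `d`-simplex, given by its `d+1` affinely independent vertices. -/
def SimplexLatticeFace (d : ℕ) (v : Fin (d + 1) → Fin d → ℝ) : Prop :=
  AffineIndependent ℝ v ∧
    ∀ k : ℕ, k < d → ∀ U : Finset (Fin (d + 1)), U.card = k + 1 →
      projTo d k ''
          ((affineSpan ℝ (v '' (U : Set (Fin (d + 1)))) : Set (Fin d → ℝ)) ∩ latticePts d)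
        = latticePts k

open scoped Classical in
/-- The sign of a facet `F` of `P`: `+1` if `F` has a relative-interior point on the
positive boundary, `-1` if on the negative boundary, `0` otherwise. -/
def facetSign (d : ℕ) (P F : Set (Fin d → ℝ)) : ℝ :=
  if ∃ x ∈ intrinsicInterior ℝ F, x ∈ PB d P then 1
  else if ∃ x ∈ intrinsicInterior ℝ F, x ∈ NB d P then -1
  else 0

/-- The Bernoulli polynomial `B_n(x)`, as a real polynomial. -/
def bernR (n : ℕ) : Polynomial ℝ := (Polynomial.bernoulli n).map (algebraMap ℚ ℝ)

/-- The `k`-th power sum polynomial `P_k(x) = (B_{k+1}(x+1) - B_{k+1}(0))/(k+1)`. -/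
def PkR (k : ℕ) : Polynomial ℝ :=
  Polynomial.C (((k : ℝ) + 1)⁻¹) *
    ((bernR (k + 1)).comp (Polynomial.X + 1) - Polynomial.C ((bernR (k + 1)).eval 0))

/-- The extension of the summation operation: for a polynomial `h(s) = Σ_k h_k s^k`,
`Σ_{s=1}^{u} h := h_0 u + Σ_{k ≥ 1} h_k P_k(u)`, as a polynomial in the upper bound `u`. -/
def extSumPoly (h : Polynomial ℝ) : Polynomial ℝ :=
  Polynomial.C (h.coeff 0) * Polynomial.X +
    ∑ k ∈ Finset.Icc 1 h.natDegree, Polynomial.C (h.coeff k) * PkR k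

/-- `fdPoly n a` is the polynomial (in the first variable `a_1`) expressing
`f_{n+1}(a_1, a 0, a 1, …)`, defined recursively by `f_1(a_1) = a_1` and
`f_d(a_1,…,a_d) = Σ_{s=1}^{a_1} f_{d-1}(a_2 s, a_3, …, a_d)` using the extended sum. -/
def fdPoly : ℕ → (ℕ → ℝ) → Polynomial ℝ
  | 0, _ => Polynomial.X
  | n + 1, a =>
      extSumPoly ((fdPoly n (fun i => a (i + 1))).comp (Polynomial.C (a 0) * Polynomial.X))

/-- `f_d(a_1, …, a_d)` where `a_k = a (k-1)` (0-indexed). -/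
def fd (d : ℕ) (a : ℕ → ℝ) : ℝ := (fdPoly (d - 1) (fun i => a (i + 1))).eval (a 0)

/-- `g_d(b_1, …, b_d) = f_d(b_1/b_0, b_2/b_1, …, b_d/b_{d-1})` where `b_k = b k` and
`b 0 = 1` by convention. -/
def gd (d : ℕ) (b : ℕ → ℝ) : ℝ := fd d (fun i => b (i + 1) / b i)

/-- `x̄` for an integer: `x̄ = x` if `x ≥ 0` and `x̄ = -x-1` if `x < 0`. -/
def barNat (n : ℤ) : ℕ := if 0 ≤ n then n.toNat else (-n - 1).toNat

/-- The half-open segment `Ω(conv(0,x))`: `(0,x]` if `x ≥ 0` and `(x,0]` if `x < 0`. -/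
def hoSeg (x : ℝ) : Set ℝ := if 0 ≤ x then Set.Ioc 0 x else Set.Ioc x 0

/-- The previous coordinate `s_{k-1}` of a point `s ∈ ℝ^d`, with `s_0 = 1`. -/
def sPrev (d : ℕ) (s : Fin d → ℝ) (k : Fin d) : ℝ :=
  if (k : ℕ) = 0 then 1 else s ⟨(k : ℕ) - 1, lt_of_le_of_lt (Nat.sub_le _ _) k.isLt⟩

/-- The nested sum `Σ_{s_1=1}^{⌊a_1 sp⌋¯} Σ_{s_2=1}^{⌊a_2 s_1⌋¯} ⋯ 1` over positive
integers. -/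
def nestedCount : ℕ → (ℕ → ℝ) → ℕ → ℕ
  | 0, _, _ => 1
  | n + 1, a, sp =>
      ∑ s ∈ Finset.Icc 1 (barNat ⌊a 0 * (sp : ℝ)⌋), nestedCount n (fun i => a (i + 1)) s

/-- The nested extended sum `Σ_{s_1=1}^{\bar{a_1 s_0}} ⋯ Σ_{s_d=1}^{\bar{a_d s_{d-1}}} 1`,
as a polynomial in `s_0`, where for positive `s` the bar is `a s` if `a > 0` and
`-a s - 1` if `a < 0`. -/
def barNested : ℕ → (ℕ → ℝ) → Polynomial ℝ
  | 0, _ => 1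
  | n + 1, a =>
      (extSumPoly (barNested n (fun i => a (i + 1)))).comp
        (if 0 < a 0 then Polynomial.C (a 0) * Polynomial.X
         else -(Polynomial.C (a 0) * Polynomial.X) - 1)

/-- Row vertex for the hat matrices: `v_{σ(p+1)}` for `p < d`. -/
def rowVert' (d : ℕ) (v : Fin (d + 1) → Fin d → ℝ) (σ : Equiv.Perm (Fin d)) (p : ℕ) :
    Fin d → ℝ :=
  if h : p < d then v (Fin.castSucc (σ ⟨p, h⟩)) else v (Fin.last d)

/-- The matrix `X̂(σ,k)` with entries `x̂_{σ(p),q} = x_{σ(p),q} - x_{d+1,q}`. -/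
def XhatM (d : ℕ) (v : Fin (d + 1) → Fin d → ℝ) (σ : Equiv.Perm (Fin d)) (k : ℕ) :
    Matrix (Fin k) (Fin k) ℝ :=
  Matrix.of fun p q =>
    coordN (rowVert' d v σ (p : ℕ)) (q : ℕ) - coordN (v (Fin.last d)) (q : ℕ)

/-- The matrix `Ŷ(σ,k)` with rows `(1, x̂_{σ(p),1},…,x̂_{σ(p),k-1})`. -/
def YhatM (d : ℕ) (v : Fin (d + 1) → Fin d → ℝ) (σ : Equiv.Perm (Fin d)) (k : ℕ) :
    Matrix (Fin k) (Fin k) ℝ :=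
  Matrix.of fun p q =>
    if (q : ℕ) = 0 then 1
    else coordN (rowVert' d v σ (p : ℕ)) ((q : ℕ) - 1) - coordN (v (Fin.last d)) ((q : ℕ) - 1)

/-- `ẑ(σ,k) = det X̂(σ,k) / det Ŷ(σ,k)`. -/
def zhat (d : ℕ) (v : Fin (d + 1) → Fin d → ℝ) (σ : Equiv.Perm (Fin d)) (k : ℕ) : ℝ :=
  (XhatM d v σ k).det / (YhatM d v σ k).det

end

section AuxLatticeFace

lemma latticePts_zero_mem (k : ℕ) : (0 : Fin k → ℝ) ∈ latticePts k :=
  fun _ => ⟨0, by simp⟩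

lemma latticePts_single_mem (k : ℕ) (i : Fin k) :
    Pi.single i (1:ℝ) ∈ latticePts k := by
  intro j
  rcases eq_or_ne j i with h | h
  · exact ⟨1, by subst h; simp⟩
  · exact ⟨0, by simp [Pi.single_eq_of_ne h]⟩

def projL (d k : ℕ) : (Fin d → ℝ) →ₗ[ℝ] (Fin k → ℝ) where
  toFun := projTo d k
  map_add' x y := by
    funext i; simp only [projTo, Pi.add_apply]; split_ifs <;> simp
  map_smul' c x := by
    funext i; simp only [projTo, Pi.smul_apply, RingHom.id_apply]; split_ifs <;> simp

lemma projL_apply (d k : ℕ) (x : Fin d → ℝ) : projL d k x = projTo d k x := rfl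

lemma projL_coe (d k : ℕ) : ⇑(projL d k) = projTo d k := rfl

lemma key_lattice (d k : ℕ) (t : Finset (Fin d → ℝ)) (hcard : t.card = k + 1)
    (himg : projTo d k '' ((affineSpan ℝ (t : Set (Fin d → ℝ)) : Set (Fin d → ℝ)) ∩ latticePts d)
      = latticePts k)
    {x : Fin d → ℝ} (hx : x ∈ affineSpan ℝ (t : Set (Fin d → ℝ)))
    (hxk : projTo d k x ∈ latticePts k) : x ∈ latticePts d := by
  classical
  set W := vectorSpan ℝ (t : Set (Fin d → ℝ)) with hW
  have hfr : Module.finrank ℝ W ≤ k := by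
    have := finrank_vectorSpan_image_finset_le ℝ (id : (Fin d → ℝ) → (Fin d → ℝ)) t hcard
    rwa [Finset.image_id] at this
  set f : W →ₗ[ℝ] (Fin k → ℝ) := (projL d k).comp W.subtype with hf
  -- a point of aff(t) ∩ ℤ^d over 0
  have h0 : (0 : Fin k → ℝ) ∈ projTo d k ''
      ((affineSpan ℝ (t : Set (Fin d → ℝ)) : Set (Fin d → ℝ)) ∩ latticePts d) := by
    rw [himg]; exact latticePts_zero_mem k
  obtain ⟨z0, ⟨hz0a, _⟩, hz0p⟩ := h0
  -- surjectivity of f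
  have hsurj : LinearMap.range f = ⊤ := by
    rw [← top_le_iff, ← (Pi.basisFun ℝ (Fin k)).span_eq, Submodule.span_le]
    rintro _ ⟨i, rfl⟩
    have hsm : Pi.basisFun ℝ (Fin k) i ∈ projTo d k ''
        ((affineSpan ℝ (t : Set (Fin d → ℝ)) : Set (Fin d → ℝ)) ∩ latticePts d) := by
      rw [himg]
      have : (Pi.basisFun ℝ (Fin k)) i = Pi.single i (1:ℝ) := by
        ext j; simp [Pi.basisFun_apply]
      rw [this]; exact latticePts_single_mem k i
    obtain ⟨z, ⟨hza, _⟩, hzp⟩ := hsm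
    have hmem : z - z0 ∈ W := by
      have := AffineSubspace.vsub_mem_direction hza hz0a
      rwa [direction_affineSpan, vsub_eq_sub] at this
    refine ⟨⟨z - z0, hmem⟩, ?_⟩
    show (projL d k) (z - z0) = _
    rw [map_sub, projL_apply, projL_apply, hz0p, hzp, sub_zero]
  have hkerbot : LinearMap.ker f = ⊥ := by
    have h1 := LinearMap.finrank_range_add_finrank_ker f
    rw [hsurj, finrank_top] at h1
    have h2 : Module.finrank ℝ (Fin k → ℝ) = k := by simp
    have h3 : Module.finrank ℝ (LinearMap.ker f) = 0 := by omega
    exact Submodule.finrank_eq_zero.mp h3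
  -- the lattice point over projTo d k x
  have hxm : projTo d k x ∈ projTo d k ''
      ((affineSpan ℝ (t : Set (Fin d → ℝ)) : Set (Fin d → ℝ)) ∩ latticePts d) := by
    rw [himg]; exact hxk
  obtain ⟨z, ⟨hza, hzl⟩, hzp⟩ := hxm
  have hmem : z - x ∈ W := by
    have := AffineSubspace.vsub_mem_direction hza hx
    rwa [direction_affineSpan, vsub_eq_sub] at this
  have hfz : f ⟨z - x, hmem⟩ = 0 := by
    show (projL d k) (z - x) = 0
    rw [map_sub, projL_apply, projL_apply, hzp, sub_self]
  have : (⟨z - x, hmem⟩ : W) = 0 := by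
    rw [← Submodule.mem_bot (R := ℝ), ← hkerbot]; exact hfz
  have hzx : z = x := by
    have := congrArg (Subtype.val) this
    simpa [sub_eq_zero] using this
  rwa [← hzx]

end AuxLatticeFace

theorem proj_latticePts_eq_latticePts_proj
    (d : ℕ) (hd : 1 ≤ d) (V : Finset (Fin d → ℝ))
    (hspan : affineSpan ℝ (V : Set (Fin d → ℝ)) = ⊤)
    (hvert : (V : Set (Fin d → ℝ))
      = Set.extremePoints ℝ (convexHull ℝ (V : Set (Fin d → ℝ))))
    (hLF : IsLatticeFace d V) :
    projTo d (d - 1) '' (latticePts d ∩ convexHull ℝ (V : Set (Fin d → ℝ)))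
      = latticePts (d - 1) ∩ projTo d (d - 1) '' convexHull ℝ (V : Set (Fin d → ℝ)) := by
  classical
  apply Set.Subset.antisymm
  · rintro _ ⟨x, ⟨hxl, hxP⟩, rfl⟩
    refine ⟨?_, x, hxP, rfl⟩
    intro i
    have hi : (i : ℕ) < d := lt_of_lt_of_le i.isLt (Nat.sub_le d 1)
    obtain ⟨n, hn⟩ := hxl ⟨(i : ℕ), hi⟩
    exact ⟨n, by simp [projTo, hi, hn]⟩
  · rintro _ ⟨hyl, x, hxP, rfl⟩
    set P : Set (Fin d → ℝ) := convexHull ℝ (V : Set (Fin d → ℝ)) with hP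
    set F : Set (Fin d → ℝ) := P ∩ (projTo d (d - 1)) ⁻¹' {projTo d (d - 1) x} with hFdef
    have hPcpt : IsCompact P := V.finite_toSet.isCompact_convexHull ℝ
    have hFcl : IsClosed ((projTo d (d - 1)) ⁻¹' {projTo d (d - 1) x}) := by
      rw [← projL_coe d (d - 1)]
      exact IsClosed.preimage (projL d (d - 1)).continuous_of_finiteDimensional
        isClosed_singleton
    have hFcpt : IsCompact F := hPcpt.inter_right hFcl
    have hFne : F.Nonempty := ⟨x, hxP, rfl⟩
    have hdlt : d - 1 < d := by omega
    set g : (Fin d → ℝ) → ℝ := fun w => w ⟨d - 1, hdlt⟩ with hg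
    have hgc : Continuous g := continuous_apply _
    obtain ⟨m, hmF, hmin⟩ := hFcpt.exists_isMinOn hFne hgc.continuousOn
    have hmP : m ∈ P := hmF.1
    have hmproj : projTo d (d - 1) m = projTo d (d - 1) x := Set.mem_singleton_iff.mp hmF.2
    -- the low coordinates of m are integers
    have hmlat : ∀ k : ℕ, k ≤ d - 1 → projTo d k m ∈ latticePts k := by
      intro k hk i
      have hik : (i : ℕ) < d - 1 := lt_of_lt_of_le i.isLt hk
      have hid : (i : ℕ) < d := lt_trans hik hdlt
      obtain ⟨n, hn⟩ := hyl ⟨(i : ℕ), hik⟩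
      refine ⟨n, ?_⟩
      have h1 : projTo d k m i = m ⟨(i : ℕ), hid⟩ := dif_pos hid
      have h2 : projTo d (d - 1) m ⟨(i : ℕ), hik⟩ = m ⟨(i : ℕ), hid⟩ := dif_pos hid
      rw [h1, ← h2, hmproj]
      exact hn
    -- minimal Carathéodory set for m
    have hex : ∃ n, ∃ t : Finset (Fin d → ℝ), t ⊆ V ∧ t.card = n ∧
        m ∈ convexHull ℝ (t : Set (Fin d → ℝ)) := ⟨V.card, V, Finset.Subset.refl V, rfl, hmP⟩
    obtain ⟨t, htV, htc, hmt⟩ := Nat.find_spec hex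
    have hmint : ∀ t' : Finset (Fin d → ℝ), t' ⊆ V → t'.card < t.card →
        m ∉ convexHull ℝ (t' : Set (Fin d → ℝ)) := by
      intro t' ht'V ht'c hmem
      exact Nat.find_min hex (htc ▸ ht'c) ⟨t', ht'V, rfl, hmem⟩
    have htne : t.Nonempty := by
      rcases Finset.eq_empty_or_nonempty t with h | h
      · subst h; simp at hmt
      · exact h
    have hai : AffineIndependent ℝ ((↑) : ↥t → (Fin d → ℝ)) := by
      by_contra h
      obtain ⟨y₀, hy₀⟩ := Caratheodory.mem_convexHull_erase h hmt
      refine hmint (t.erase ↑y₀) ((Finset.erase_subset _ _).trans htV) ?_ hy₀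
      exact Finset.card_erase_lt_of_mem y₀.2
    by_cases hcd : t.card ≤ d
    · -- m lies in the affine span of at most d vertices: m is a lattice point
      obtain ⟨k, htk⟩ : ∃ k, t.card = k + 1 := ⟨t.card - 1, by have := htne.card_pos; omega⟩
      have hkd : k < d := by omega
      have himg := hLF k hkd t htV htk
      have hmaff : m ∈ affineSpan ℝ (t : Set (Fin d → ℝ)) :=
        convexHull_subset_affineSpan _ hmt
      have hmlatd : m ∈ latticePts d :=
        key_lattice d k t htk himg hmaff (hmlat k (by omega))
      exact ⟨m, ⟨hmlatd, hmP⟩, hmproj⟩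
    · exfalso
      haveI : Nonempty ↥t := ⟨⟨htne.choose, htne.choose_spec⟩⟩
      have hrange : Set.range ((↑) : ↥t → (Fin d → ℝ)) = (t : Set (Fin d → ℝ)) := by
        ext z; simp
      have hfrd : Module.finrank ℝ (Fin d → ℝ) = d := by simp
      have hcard1 : t.card = d + 1 := by
        have h1 := hai.finrank_vectorSpan_add_one
        have h2 : Module.finrank ℝ (vectorSpan ℝ
            (Set.range ((↑) : ↥t → (Fin d → ℝ)))) ≤ d := by
          have := Submodule.finrank_le (vectorSpan ℝ (Set.range ((↑) : ↥t → (Fin d → ℝ))))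
          omega
        rw [Fintype.card_coe] at h1
        omega
      have htot : affineSpan ℝ (Set.range ((↑) : ↥t → (Fin d → ℝ))) = ⊤ := by
        rw [hai.affineSpan_eq_top_iff_card_eq_finrank_add_one, Fintype.card_coe, hfrd, hcard1]
      let b : AffineBasis ↥t ℝ (Fin d → ℝ) := ⟨((↑) : ↥t → (Fin d → ℝ)), hai, htot⟩
      have hbcoe : ⇑b = ((↑) : ↥t → (Fin d → ℝ)) := rfl
      have hnn : ∀ i, 0 ≤ b.coord i m := by
        intro i
        have hconv : Convex ℝ ((b.coord i) ⁻¹' Set.Ici (0 : ℝ)) :=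
          (convex_Ici (0 : ℝ)).affine_preimage (b.coord i)
        have hsub : (t : Set (Fin d → ℝ)) ⊆ (b.coord i) ⁻¹' Set.Ici (0 : ℝ) := by
          intro z hz
          have hz' : z ∈ t := hz
          have hco : b.coord i (b ⟨z, hz'⟩) = if i = ⟨z, hz'⟩ then 1 else 0 :=
            b.coord_apply i ⟨z, hz'⟩
          rw [hbcoe] at hco
          simp only [Set.mem_preimage, Set.mem_Ici]
          rw [show b.coord i z = if i = ⟨z, hz'⟩ then 1 else 0 from hco]
          split <;> norm_num
        exact convexHull_min hsub hconv hmt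
      have hpos : ∀ i, 0 < b.coord i m := by
        intro i
        rcases (hnn i).lt_or_eq with h | h
        · exact h
        · exfalso
          set w : (Fin d → ℝ) → ℝ := fun z => if hz : z ∈ t then b.coord ⟨z, hz⟩ m else 0
            with hwdef
          have hwj : ∀ j : ↥t, w ↑j = b.coord j m := by
            intro j; simp only [hwdef, dif_pos j.2, Subtype.coe_eta]
          have hw0 : w ↑i = 0 := by rw [hwj i, ← h]
          have hsumt : ∑ z ∈ t, w z = 1 := by
            rw [← Finset.sum_attach t w]
            rw [Finset.sum_congr rfl (fun j _ => hwj j), ← Finset.univ_eq_attach]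
            exact b.sum_coord_apply_eq_one m
          have hcomb : ∑ z ∈ t, w z • z = m := by
            rw [← Finset.sum_attach t (fun z => w z • z)]
            have : ∀ j : ↥t, w ↑j • (↑j : Fin d → ℝ) = b.coord j m • b j := by
              intro j; rw [hwj j, hbcoe]
            rw [Finset.sum_congr rfl (fun j _ => this j), ← Finset.univ_eq_attach]
            exact b.linear_combination_coord_eq_self m
          have hmer : m ∈ convexHull ℝ ((t.erase ↑i : Finset _) : Set (Fin d → ℝ)) := by
            rw [Finset.convexHull_eq]
            have hsum' : ∑ z ∈ t.erase ↑i, w z = 1 := by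
              rw [Finset.sum_erase _ hw0]; exact hsumt
            refine ⟨w, ?_, hsum', ?_⟩
            · intro z hz
              by_cases hzt : z ∈ t
              · rw [hwdef]; simp only [dif_pos hzt]; exact hnn _
              · simp [hwdef, hzt]
            · have herase : ∑ z ∈ t.erase ↑i, w z • (z : Fin d → ℝ) = ∑ z ∈ t, w z • z :=
                Finset.sum_erase t (by rw [hw0, zero_smul])
              rw [Finset.centerMass_eq_of_sum_1 _ _ hsum']
              simp only [id_eq]
              rw [herase, hcomb]
          exact hmint (t.erase ↑i) ((Finset.erase_subset _ _).trans htV)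
            (Finset.card_erase_lt_of_mem i.2) hmer
      have hint : m ∈ interior P := by
        have h1 : m ∈ interior (convexHull ℝ (Set.range ⇑b)) := by
          rw [b.interior_convexHull]; exact hpos
        rw [hbcoe, hrange] at h1
        exact interior_mono (convexHull_mono htV) h1
      obtain ⟨ε, hε, hball⟩ := Metric.isOpen_iff.mp isOpen_interior m hint
      set e : Fin d → ℝ := Pi.single ⟨d - 1, hdlt⟩ (1 : ℝ) with he
      set δ : ℝ := ε / (2 * (‖e‖ + 1)) with hδ
      have hepos : (0 : ℝ) < ‖e‖ + 1 := by positivity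
      have hδpos : 0 < δ := by positivity
      set m' : Fin d → ℝ := m - δ • e with hm'
      have hm'P : m' ∈ interior P := by
        apply hball
        rw [Metric.mem_ball, dist_eq_norm]
        have hsub : m' - m = -(δ • e) := by rw [hm']; abel
        rw [hsub, norm_neg, norm_smul, Real.norm_eq_abs, abs_of_pos hδpos]
        have h1 : δ * ‖e‖ ≤ δ * (‖e‖ + 1) := by nlinarith [norm_nonneg e]
        have h2 : δ * (‖e‖ + 1) = ε / 2 := by
          rw [hδ]; field_simp
        linarith
      have hm'proj : projTo d (d - 1) m' = projTo d (d - 1) m := by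
        funext j
        have hjd : (j : ℕ) < d := lt_trans j.isLt hdlt
        have hje : e ⟨(j : ℕ), hjd⟩ = 0 := by
          apply Pi.single_eq_of_ne
          have := j.isLt
          intro hcon
          have : (j : ℕ) = d - 1 := congrArg Fin.val hcon
          omega
        simp only [projTo, dif_pos hjd, hm', Pi.sub_apply, Pi.smul_apply, hje, smul_eq_mul,
          mul_zero, sub_zero]
      have hm'F : m' ∈ F := ⟨interior_subset hm'P, by
        rw [Set.mem_preimage, hm'proj, hmproj]; exact rfl⟩
      have hle : g m ≤ g m' := hmin hm'F
      have hgm' : g m' = g m - δ := by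
        have : e ⟨d - 1, hdlt⟩ = 1 := by rw [he]; exact Pi.single_eq_same _ _
        simp only [hg, hm', Pi.sub_apply, Pi.smul_apply, this, smul_eq_mul, mul_one]
      rw [hgm'] at hle
      linarith
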